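/- arXiv:1112.5695 — 2 statements merged into one kernel-verified Lean document; each statement's English description precedes it below -/
import Mathlib

section
/- Let K be a complete discrete valuation field of characteristic 0 whose residue field k has characteristic p > 0, let e = v_K(p) and e_0 = e/(p-1). For integers n > 1 and m > e + e_0, the multiplication-by-p map on Milnor K-groups induces a surjective homomorphism p : U^{m-e} k_{q,n-1} → U^m k_{q,n}, where k_{q,n} = K_q^M(K)/p^n and U^m k_{q,n} denotes the image of U^m K_q^M(K) in k_{q,n}. -/
set_option autoImplicit false

/-! Milnor K-theory: generators and relations. -/

/-- The subgroup of relations (multilinearity and Steinberg) defining the `q`-th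
Milnor K-group of a field `K`. -/
def MilnorKRel (K : Type*) [Field K] (q : ℕ) :
    AddSubgroup (FreeAbelianGroup (Fin q → Kˣ)) :=
  AddSubgroup.closure
    ({x | ∃ (f : Fin q → Kˣ) (i : Fin q) (a b : Kˣ),
        x = FreeAbelianGroup.of (Function.update f i (a * b))
          - FreeAbelianGroup.of (Function.update f i a)
          - FreeAbelianGroup.of (Function.update f i b)} ∪
     {x | ∃ (f : Fin q → Kˣ) (i j : Fin q), i ≠ j ∧ (f i : K) + (f j : K) = 1 ∧
        x = FreeAbelianGroup.of f})

/-- The `q`-th Milnor K-group `K_q^M(K)` of a field `K`. -/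
def MilnorK (K : Type*) [Field K] (q : ℕ) : Type _ :=
  FreeAbelianGroup (Fin q → Kˣ) ⧸ MilnorKRel K q

instance (K : Type*) [Field K] (q : ℕ) : AddCommGroup (MilnorK K q) :=
  QuotientAddGroup.Quotient.addCommGroup _

/-- The Milnor symbol `{f 0, …, f (q-1)}` in `K_q^M(K)`. -/
def MilnorK.symbol (K : Type*) [Field K] (q : ℕ) (f : Fin q → Kˣ) : MilnorK K q :=
  QuotientAddGroup.mk (FreeAbelianGroup.of f)

/-- `U^m K_q^M(K)`: the subgroup of `K_q^M(K)` generated by symbols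
`{1 + m_K^m, K^×, …, K^×}` (for `m ≥ 1`). -/
def UK (O K : Type*) [CommRing O] [IsLocalRing O] [Field K] [Algebra O K] (m q : ℕ) :
    AddSubgroup (MilnorK K q) :=
  AddSubgroup.closure
    {z | ∃ (f : Fin q → Kˣ) (h0 : 0 < q) (a : O),
      a ∈ (IsLocalRing.maximalIdeal O) ^ m ∧
      (f ⟨0, h0⟩ : K) = 1 + algebraMap O K a ∧ z = MilnorK.symbol K q f}

/-- The subgroup `c·A` of an additive group `A`. -/
def pPowSub (A : Type*) [AddCommGroup A] (c : ℕ) : AddSubgroup A :=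
  AddSubgroup.closure {x | ∃ y : A, x = c • y}

/-- `k_{q,n} = K_q^M(K)/p^n` (here `c = p^n`). -/
def kmod (K : Type*) [Field K] (q c : ℕ) : Type _ :=
  MilnorK K q ⧸ pPowSub (MilnorK K q) c

instance (K : Type*) [Field K] (q c : ℕ) : AddCommGroup (kmod K q c) :=
  QuotientAddGroup.Quotient.addCommGroup _

/-- The projection `K_q^M(K) → k_{q,n}`. -/
def kmod.mk (K : Type*) [Field K] (q c : ℕ) : MilnorK K q →+ kmod K q c :=
  QuotientAddGroup.mk' (pPowSub (MilnorK K q) c)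

/-- `U^m k_{q,n}`: the image of `U^m K_q^M(K)` in `k_{q,n} = K_q^M(K)/p^n`
(here `c = p^n`). -/
def Umk (O K : Type*) [CommRing O] [IsLocalRing O] [Field K] [Algebra O K]
    (m q c : ℕ) : AddSubgroup (kmod K q c) :=
  (UK O K m q).map (kmod.mk K q c)

/-- The class in `U^m k_{q,n}` of an element of `U^m K_q^M(K)`. -/
def Umk.of (O K : Type*) [CommRing O] [IsLocalRing O] [Field K] [Algebra O K]
    (m q c : ℕ) (x : MilnorK K q) (hx : x ∈ UK O K m q) : Umk O K m q c :=
  ⟨kmod.mk K q c x, AddSubgroup.mem_map_of_mem _ hx⟩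


open Finset in
lemma keyS {O : Type*} [CommRing O] {P e s : ℕ} (hP : P.Prime) {ϖ x y : O}
    (hpe : ϖ ^ e ∣ (P : O)) (hy : ϖ ^ s ∣ y) :
    ∃ r : O, (x + y) ^ P = x ^ P + P * x ^ (P - 1) * y + r ∧
      ϖ ^ (min (e + 2 * s) (P * s)) ∣ r := by
  obtain ⟨P', hP'⟩ : ∃ P', P = P' + 2 := ⟨P - 2, (Nat.sub_add_cancel hP.two_le).symm⟩
  subst hP'
  refine ⟨∑ k ∈ range (P' + 1), x ^ k * y ^ (P' + 2 - k) * ((P' + 2).choose k : O), ?_, ?_⟩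
  · rw [add_pow, Finset.sum_range_succ, Finset.sum_range_succ]
    have h1 : (P' + 2).choose (P' + 1) = P' + 2 := Nat.choose_succ_self_right _
    have h2 : (P' + 2).choose (P' + 2) = 1 := Nat.choose_self _
    rw [h1, h2, show P' + 2 - (P' + 1) = 1 from by omega,
      show P' + 2 - (P' + 2) = 0 from by omega, show P' + 2 - 1 = P' + 1 from by omega]
    push_cast
    ring
  · apply Finset.dvd_sum
    intro k hk
    rw [Finset.mem_range] at hk
    rcases Nat.eq_zero_or_pos k with hk0 | hk0
    · subst hk0
      refine dvd_trans (pow_dvd_pow ϖ (min_le_right _ _)) ?_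
      have h3 : ϖ ^ ((P' + 2) * s) ∣ y ^ (P' + 2) := by
        obtain ⟨w, hw⟩ := hy
        exact ⟨w ^ (P' + 2), by rw [hw, mul_pow, ← pow_mul, mul_comm s]⟩
      rw [Nat.sub_zero]
      exact (h3.mul_left _).mul_right _
    · refine dvd_trans (pow_dvd_pow ϖ (min_le_left _ _)) ?_
      have hc : (P' + 2 : ℕ) ∣ (P' + 2).choose k :=
        Nat.Prime.dvd_choose_self hP (by omega) (by omega)
      obtain ⟨c, hc⟩ := hc
      obtain ⟨j, hj⟩ : ∃ j, P' + 2 - k = j + 2 := ⟨P' - k, by omega⟩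
      have h2s : ϖ ^ (2 * s) ∣ y ^ (P' + 2 - k) := by
        rw [hj, pow_add]
        have : (ϖ ^ s) ^ 2 ∣ y ^ 2 := pow_dvd_pow_of_dvd hy 2
        rw [← pow_mul, mul_comm s 2] at this
        exact this.mul_left _
      rw [pow_add]
      have : ((P' + 2).choose k : O) = (P' + 2 : O) * c := by rw [hc]; push_cast; ring
      rw [this]
      calc ϖ ^ e * ϖ ^ (2 * s) ∣ (P' + 2 : O) * y ^ (P' + 2 - k) :=
            mul_dvd_mul (by exact_mod_cast hpe) h2s
        _ ∣ x ^ k * y ^ (P' + 2 - k) * ((P' + 2 : O) * c) := ⟨x ^ k * c, by ring⟩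

lemma one_add_isUnit {O : Type*} [CommRing O] [IsLocalRing O] {a : O}
    (ha : a ∈ IsLocalRing.maximalIdeal O) : IsUnit (1 + a) := by
  by_contra h
  have h1 : (1 + a) ∈ IsLocalRing.maximalIdeal O := h
  have : (1 : O) ∈ IsLocalRing.maximalIdeal O := by
    have := sub_mem h1 ha
    simpa using this
  exact (Ideal.ne_top_iff_one _).mp (IsLocalRing.maximalIdeal.isMaximal O).ne_top this

lemma newton_step {O : Type*} [CommRing O] [IsLocalRing O] {P e s m : ℕ} (hP : P.Prime)
    {ϖ c b : O} (hϖ : ϖ ∈ IsLocalRing.maximalIdeal O) (hc : IsUnit c)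
    (hpc : (P : O) = c * ϖ ^ e) (hs : 1 ≤ s) (hes : e + s = m) (hps : m + 1 ≤ P * s)
    (k : ℕ) (a : O) (ha : ϖ ^ s ∣ a) (hd : ϖ ^ (m + k) ∣ (1 + b - (1 + a) ^ P)) :
    ∃ a' : O, ϖ ^ s ∣ a' ∧ ϖ ^ k ∣ (a' - a) ∧ ϖ ^ (m + k + 1) ∣ (1 + b - (1 + a') ^ P) := by
  set x := 1 + a with hx
  have hamem : a ∈ IsLocalRing.maximalIdeal O := by
    obtain ⟨w, hw⟩ := ha
    rw [hw]
    exact Ideal.mul_mem_right _ _ (by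
      have : ϖ ^ s = ϖ ^ (s - 1) * ϖ := by rw [← pow_succ]; congr 1; omega
      rw [this]
      exact Ideal.mul_mem_left _ _ hϖ)
  have hxu : IsUnit x := one_add_isUnit hamem
  have hxu' : IsUnit (c * x ^ (P - 1)) := hc.mul (hxu.pow _)
  obtain ⟨w, hw⟩ := hd
  set u := hxu'.unit with hu
  set t : O := ϖ ^ (s + k) * w * ↑u⁻¹ with ht
  have huu : c * x ^ (P - 1) * ↑u⁻¹ = 1 := by
    rw [← IsUnit.unit_spec hxu']
    exact u.mul_inv
  have h1 : (P : O) * x ^ (P - 1) * t = 1 + b - x ^ P := by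
    have hpow : ϖ ^ e * ϖ ^ (s + k) = ϖ ^ (m + k) := by
      rw [← pow_add]; congr 1; omega
    calc (P : O) * x ^ (P - 1) * t
        = (c * x ^ (P - 1) * ↑u⁻¹) * (ϖ ^ e * ϖ ^ (s + k)) * w := by rw [hpc, ht]; ring
      _ = ϖ ^ (m + k) * w := by rw [huu, hpow, one_mul]
      _ = 1 + b - x ^ P := hw.symm
  obtain ⟨r, hr1, hr2⟩ := keyS (x := x) (y := t) hP ⟨c, by rw [hpc]; ring⟩
    (⟨w * ↑u⁻¹, by rw [ht]; ring⟩ : ϖ ^ (s + k) ∣ t)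
  have hmin : m + k + 1 ≤ min (e + 2 * (s + k)) (P * (s + k)) := by
    have h2 : P * (s + k) = P * s + P * k := by ring
    have h3 : k ≤ P * k := Nat.le_mul_of_pos_left k (by have := hP.two_le; omega)
    omega
  have hts : ϖ ^ (s + k) ∣ t := ⟨w * ↑u⁻¹, by rw [ht]; ring⟩
  refine ⟨a + t, dvd_add ha (dvd_trans (pow_dvd_pow ϖ (by omega : s ≤ s + k)) hts), ?_, ?_⟩
  · have : a + t - a = t := by ring
    rw [this]
    exact dvd_trans (pow_dvd_pow ϖ (by omega : k ≤ s + k)) hts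
  have hxt : (1 : O) + (a + t) = x + t := by rw [hx]; ring
  rw [hxt]
  have : 1 + b - (x + t) ^ P = -r := by rw [hr1]; linear_combination -h1
  rw [this, dvd_neg]
  exact dvd_trans (pow_dvd_pow ϖ hmin) hr2

lemma solve_pth_root {O : Type*} [CommRing O] [IsLocalRing O]
    [IsAdicComplete (IsLocalRing.maximalIdeal O) O] {P e s m : ℕ} (hP : P.Prime)
    {ϖ c b : O} (hspan : IsLocalRing.maximalIdeal O = Ideal.span {ϖ}) (hc : IsUnit c)
    (hpc : (P : O) = c * ϖ ^ e) (hs : 1 ≤ s) (hes : e + s = m) (hps : m + 1 ≤ P * s)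
    (hb : ϖ ^ m ∣ b) :
    ∃ a : O, ϖ ^ s ∣ a ∧ (1 + a) ^ P = 1 + b := by
  have hϖ : ϖ ∈ IsLocalRing.maximalIdeal O := by
    rw [hspan]; exact Ideal.mem_span_singleton_self ϖ
  have memdvd : ∀ (j : ℕ) (z : O), z ∈ (IsLocalRing.maximalIdeal O) ^ j ↔ ϖ ^ j ∣ z := by
    intro j z
    rw [hspan, Ideal.span_singleton_pow, Ideal.mem_span_singleton]
  -- the submodule I^j • ⊤ is just I^j
  have smtop : ∀ j : ℕ, ((IsLocalRing.maximalIdeal O) ^ j • ⊤ : Submodule O O)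
      = (IsLocalRing.maximalIdeal O) ^ j := by
    intro j; rw [Ideal.smul_eq_mul, Ideal.mul_top]
  have step : ∀ (k : ℕ) (a : O), ϖ ^ s ∣ a → ϖ ^ (m + k) ∣ (1 + b - (1 + a) ^ P) →
      ∃ a' : O, ϖ ^ s ∣ a' ∧ ϖ ^ k ∣ (a' - a) ∧ ϖ ^ (m + (k + 1)) ∣ (1 + b - (1 + a') ^ P) := by
    intro k a h1 h2
    obtain ⟨a', ha1, ha2, ha3⟩ := newton_step hP hϖ hc hpc hs hes hps k a h1 h2
    exact ⟨a', ha1, ha2, by rw [show m + (k + 1) = m + k + 1 from by omega]; exact ha3⟩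
  choose! g hg using step
  obtain ⟨A, hA0, hAsucc⟩ : ∃ A : ℕ → O, A 0 = 0 ∧ ∀ k, A (k + 1) = g k (A k) :=
    ⟨fun k => Nat.rec 0 g k, rfl, fun k => rfl⟩
  have hinv : ∀ k, ϖ ^ s ∣ A k ∧ ϖ ^ (m + k) ∣ (1 + b - (1 + A k) ^ P) := by
    intro k
    induction k with
    | zero =>
      rw [hA0]
      refine ⟨dvd_zero _, ?_⟩
      have h : (1 : O) + b - (1 + 0) ^ P = b := by rw [add_zero, one_pow]; ring
      rw [h]
      exact dvd_trans (pow_dvd_pow ϖ (by omega)) hb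
    | succ k ih =>
      rw [hAsucc]
      exact ⟨(hg k (A k) ih.1 ih.2).1, (hg k (A k) ih.1 ih.2).2.2⟩
  have hAs : ∀ k, ϖ ^ s ∣ A k := fun k => (hinv k).1
  have hAd : ∀ k, ϖ ^ (m + k) ∣ (1 + b - (1 + A k) ^ P) := fun k => (hinv k).2
  have hdiff : ∀ k, ϖ ^ k ∣ A (k + 1) - A k := by
    intro k
    rw [hAsucc]
    exact (hg k (A k) (hinv k).1 (hinv k).2).2.1
  have hcauchy : ∀ {j k : ℕ}, j ≤ k → ϖ ^ j ∣ A k - A j := by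
    intro j k hjk
    induction k with
    | zero => simp [Nat.le_zero.mp hjk]
    | succ k ih =>
      rcases Nat.lt_or_ge j (k + 1) with h | h
      · have h1 : ϖ ^ j ∣ A (k + 1) - A k :=
          dvd_trans (pow_dvd_pow ϖ (by omega)) (hdiff k)
        have h2 : ϖ ^ j ∣ A k - A j := ih (by omega)
        have := dvd_add h1 h2
        simpa using this
      · have : j = k + 1 := by omega
        subst this
        simp
  obtain ⟨L, hL⟩ := IsPrecomplete.prec (IsAdicComplete.toIsPrecomplete (I := IsLocalRing.maximalIdeal O) (M := O)) (f := A) (by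
    intro j k hjk
    rw [SModEq.sub_mem, smtop, memdvd]
    exact (dvd_sub_comm.mp (hcauchy hjk)))
  have hLA : ∀ k, ϖ ^ k ∣ L - A k := by
    intro k
    have := (hL k)
    rw [SModEq.sub_mem, smtop, memdvd] at this
    exact dvd_sub_comm.mp this
  refine ⟨L, ?_, ?_⟩
  · have h1 : ϖ ^ s ∣ L - A s := hLA s
    have := dvd_add (hAs s) h1
    simpa using this
  · have hzero : ∀ j : ℕ, ϖ ^ j ∣ (1 + b - (1 + L) ^ P) := by
      intro j
      have h1 : ϖ ^ j ∣ (1 + b - (1 + A j) ^ P) :=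
        dvd_trans (pow_dvd_pow ϖ (by omega)) (hAd j)
      have h2 : ϖ ^ j ∣ ((1 + A j) ^ P - (1 + L) ^ P) := by
        have h3 : (1 + A j) - (1 + L) ∣ (1 + A j) ^ P - (1 + L) ^ P :=
          sub_dvd_pow_sub_pow _ _ _
        have h4 : ϖ ^ j ∣ (1 + A j) - (1 + L) := by
          have := (hLA j)
          have h5 : (1 + A j) - (1 + L) = -(L - A j) := by ring
          rw [h5, dvd_neg]
          exact this
        exact dvd_trans h4 h3
      have := dvd_add h1 h2
      simpa using this
    have hD : (1 + b - (1 + L) ^ P) = 0 := by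
      refine IsHausdorff.haus (IsAdicComplete.toIsHausdorff (I := IsLocalRing.maximalIdeal O) (M := O)) _ (fun j => ?_)
      rw [SModEq.zero, smtop, memdvd]
      exact hzero j
    have := sub_eq_zero.mp hD
    exact this.symm

lemma symbol_mul {K : Type*} [Field K] {q : ℕ} (f : Fin q → Kˣ) (i : Fin q) (a b : Kˣ) :
    MilnorK.symbol K q (Function.update f i (a * b)) =
      MilnorK.symbol K q (Function.update f i a) + MilnorK.symbol K q (Function.update f i b) := by
  have hmem : (FreeAbelianGroup.of (Function.update f i (a * b))
      - FreeAbelianGroup.of (Function.update f i a)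
      - FreeAbelianGroup.of (Function.update f i b)) ∈ MilnorKRel K q :=
    AddSubgroup.subset_closure (Or.inl ⟨f, i, a, b, rfl⟩)
  have h := (QuotientAddGroup.eq_zero_iff _).mpr hmem
  rw [QuotientAddGroup.mk_sub, QuotientAddGroup.mk_sub, sub_sub, sub_eq_zero] at h
  exact h

lemma symbol_one {K : Type*} [Field K] {q : ℕ} (f : Fin q → Kˣ) (i : Fin q) :
    MilnorK.symbol K q (Function.update f i 1) = 0 := by
  have h := symbol_mul f i 1 1
  rw [mul_one] at h
  exact left_eq_add.mp h

lemma symbol_pow {K : Type*} [Field K] {q : ℕ} (f : Fin q → Kˣ) (i : Fin q) (u : Kˣ) (j : ℕ) :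
    MilnorK.symbol K q (Function.update f i (u ^ j)) = j • MilnorK.symbol K q (Function.update f i u) := by
  induction j with
  | zero => rw [pow_zero, zero_smul]; exact symbol_one f i
  | succ j ih =>
    rw [pow_succ, symbol_mul, ih, succ_nsmul]

lemma smul_symbol {K : Type*} [Field K] {q : ℕ} (f : Fin q → Kˣ) (i : Fin q) (P : ℕ) :
    P • MilnorK.symbol K q f = MilnorK.symbol K q (Function.update f i ((f i) ^ P)) := by
  conv_lhs => rw [← Function.update_eq_self i f]
  rw [symbol_pow]

/-- **Lemma 1 (surjectivity).** Let `K` be a complete discrete valuation field of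
characteristic `0` whose residue field has characteristic `p > 0`, `e = v_K(p)`,
`e₀ = e/(p-1)`.  For `n > 1` and `m > e + e₀`, multiplication by `p` induces a
surjective homomorphism `U^{m-e} k_{q,n-1} → U^m k_{q,n}`. -/
theorem milnor_U_mul_p_surjective
    (O : Type*) [CommRing O] [IsDomain O] [IsDiscreteValuationRing O]
    [IsAdicComplete (IsLocalRing.maximalIdeal O) O]
    (K : Type*) [Field K] [Algebra O K] [IsFractionRing O K] [CharZero K]
    (p : ℕ) [Fact p.Prime] [CharP (IsLocalRing.ResidueField O) p]
    (e : ℕ)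
    (he : (p : O) ∈ (IsLocalRing.maximalIdeal O) ^ e ∧
          (p : O) ∉ (IsLocalRing.maximalIdeal O) ^ (e + 1))
    (q n m : ℕ) (hn : 1 < n)
    (hm : (e : ℚ) + (e : ℚ) / ((p : ℚ) - 1) < (m : ℚ)) :
    ∃ φ : Umk O K (m - e) q (p ^ (n - 1)) →+ Umk O K m q (p ^ n),
      Function.Surjective φ ∧
      ∀ (x : MilnorK K q) (hx : x ∈ UK O K (m - e) q),
        ∃ h : kmod.mk K q (p ^ n) (p • x) ∈ Umk O K m q (p ^ n),
          φ (Umk.of O K (m - e) q (p ^ (n - 1)) x hx) = ⟨kmod.mk K q (p ^ n) (p • x), h⟩ := by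
  classical
  have hP : p.Prime := Fact.out
  obtain ⟨ϖ, hϖirr⟩ := IsDiscreteValuationRing.exists_irreducible O
  have hspan : IsLocalRing.maximalIdeal O = Ideal.span {ϖ} := hϖirr.maximalIdeal_eq
  have memdvd : ∀ (j : ℕ) (z : O), z ∈ (IsLocalRing.maximalIdeal O) ^ j ↔ ϖ ^ j ∣ z := by
    intro j z; rw [hspan, Ideal.span_singleton_pow, Ideal.mem_span_singleton]
  have hϖmem : ϖ ∈ IsLocalRing.maximalIdeal O := by
    rw [hspan]; exact Ideal.mem_span_singleton_self ϖ
  have hpm : (p : O) ∈ IsLocalRing.maximalIdeal O := by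
    have h0 : ((p : ℕ) : IsLocalRing.ResidueField O) = 0 := CharP.cast_eq_zero _ p
    have h1 : (IsLocalRing.residue O) ((p : ℕ) : O) = 0 := by rw [map_natCast]; exact h0
    exact Ideal.Quotient.eq_zero_iff_mem.mp h1
  have he1 : 1 ≤ e := by
    by_contra h
    have he0 : e = 0 := by omega
    apply he.2
    rw [he0, zero_add, pow_one]
    exact hpm
  have hp1Q : (0:ℚ) < (p:ℚ) - 1 := by
    have h2 := hP.two_le
    have h3 : (2:ℚ) ≤ (p:ℚ) := by exact_mod_cast h2
    linarith
  have hem : e < m := by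
    have h1 : (0:ℚ) ≤ (e:ℚ) / ((p:ℚ) - 1) := div_nonneg (by positivity) (le_of_lt hp1Q)
    have h2 : (e:ℚ) < (m:ℚ) := by linarith
    exact_mod_cast h2
  set s := m - e with hsdef
  have hes : e + s = m := by omega
  have hs1 : 1 ≤ s := by omega
  have hps : m + 1 ≤ p * s := by
    have hcast : ((s : ℕ) : ℚ) = (m:ℚ) - (e:ℚ) := by
      rw [hsdef, Nat.cast_sub (le_of_lt hem)]
    have h1 : (e:ℚ) / ((p:ℚ) - 1) < (s:ℚ) := by rw [hcast]; linarith
    have h2 : (e:ℚ) < (s:ℚ) * ((p:ℚ) - 1) := (div_lt_iff₀ hp1Q).mp h1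
    have h3 : (e:ℚ) < ((s * (p - 1) : ℕ) : ℚ) := by
      rwa [Nat.cast_mul, Nat.cast_sub hP.one_le]
    have h4 : e < s * (p - 1) := by exact_mod_cast h3
    have h5 : s * (p - 1) + s = s * p := by
      have h6 : p - 1 + 1 = p := Nat.sub_add_cancel hP.one_le
      calc s * (p - 1) + s = s * (p - 1 + 1) := by ring
        _ = s * p := by rw [h6]
    calc m + 1 = (e + 1) + s := by omega
      _ ≤ s * (p - 1) + s := Nat.add_le_add_right h4 s
      _ = s * p := h5
      _ = p * s := Nat.mul_comm s p
  have hpe : ϖ ^ e ∣ (p : O) := (memdvd e _).mp he.1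
  obtain ⟨c, hc0⟩ := hpe
  have hpe : ϖ ^ e ∣ (p : O) := ⟨c, hc0⟩
  have hcunit : IsUnit c := by
    by_contra h
    have hcm : c ∈ IsLocalRing.maximalIdeal O := (IsLocalRing.mem_maximalIdeal c).mpr h
    apply he.2
    rw [memdvd]
    obtain ⟨d, hd⟩ := Ideal.mem_span_singleton.mp (hspan ▸ hcm)
    exact ⟨d, by rw [hc0, hd, pow_succ]; ring⟩
  have hpc : (p : O) = c * ϖ ^ e := by rw [hc0]; ring
  have hdvd_mem : ∀ a : O, ϖ ^ s ∣ a → a ∈ IsLocalRing.maximalIdeal O := by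
    intro a ha
    obtain ⟨w, hw⟩ := ha
    rw [hw]
    refine Ideal.mul_mem_right _ _ ?_
    have h : ϖ ^ s = ϖ ^ (s - 1) * ϖ := by rw [← pow_succ]; congr 1; omega
    rw [h]
    exact Ideal.mul_mem_left _ _ hϖmem
  have hpow_mem : ∀ a : O, ϖ ^ s ∣ a → ϖ ^ m ∣ ((1 + a) ^ p - 1) := by
    intro a ha
    obtain ⟨r, hr1, hr2⟩ := keyS (x := (1:O)) (y := a) hP hpe ha
    have h1 : (1 + a) ^ p - 1 = (p:O) * 1 ^ (p - 1) * a + r := by rw [hr1]; ring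
    rw [h1]
    refine dvd_add ?_ (dvd_trans (pow_dvd_pow ϖ ?_) hr2)
    · obtain ⟨a', ha'⟩ := ha
      refine ⟨c * a', ?_⟩
      rw [hpc, ha', one_pow, ← hes, pow_add]
      ring
    · refine le_min (by omega) (by omega)
  -- the multiplication-by-p homomorphism on the Milnor K-group
  set pHom : MilnorK K q →+ MilnorK K q :=
    AddMonoidHom.mk' (fun x => p • x) (fun x y => smul_add p x y) with hpHom
  have hUK : ∀ x ∈ UK O K s q, p • x ∈ UK O K m q := by
    have hle : UK O K s q ≤ (UK O K m q).comap pHom := by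
      refine (AddSubgroup.closure_le _).mpr ?_
      rintro z ⟨f, h0, a, haMem, hf, rfl⟩
      simp only [SetLike.mem_coe, AddSubgroup.mem_comap]
      show p • MilnorK.symbol K q f ∈ UK O K m q
      rw [smul_symbol f ⟨0, h0⟩ p]
      apply AddSubgroup.subset_closure
      refine ⟨Function.update f ⟨0, h0⟩ ((f ⟨0, h0⟩) ^ p), h0, (1 + a) ^ p - 1, ?_, ?_, rfl⟩
      · rw [memdvd]
        exact hpow_mem a ((memdvd s a).mp haMem)
      · rw [Function.update_self, Units.val_pow_eq_pow_val, hf]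
        simp only [map_sub, map_pow, map_add, map_one]
        ring
    intro x hx
    exact AddSubgroup.mem_comap.mp (hle hx)
  have hOnto : ∀ y ∈ UK O K m q, ∃ x ∈ UK O K s q, p • x = y := by
    have hle : UK O K m q ≤ (UK O K s q).map pHom := by
      refine (AddSubgroup.closure_le _).mpr ?_
      rintro z ⟨f, h0, b, hbMem, hf, rfl⟩
      obtain ⟨a, has, hasol⟩ :=
        solve_pth_root hP hspan hcunit hpc hs1 hes hps ((memdvd m b).mp hbMem)
      have hu : IsUnit ((1:O) + a) := one_add_isUnit (hdvd_mem a has)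
      set v : Kˣ := Units.map (algebraMap O K : O →+* K).toMonoidHom hu.unit with hvdef
      have hv : (v : K) = 1 + algebraMap O K a := by
        rw [hvdef, Units.coe_map]
        show (algebraMap O K) ↑hu.unit = 1 + algebraMap O K a
        rw [IsUnit.unit_spec, map_add, map_one]
      have hvp : v ^ p = f ⟨0, h0⟩ := by
        apply Units.ext
        rw [Units.val_pow_eq_pow_val, hf, hv]
        have h1 : ((1:K) + algebraMap O K a) ^ p = algebraMap O K ((1 + a) ^ p) := by
          rw [map_pow, map_add, map_one]
        rw [h1, hasol, map_add, map_one]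
      refine SetLike.mem_coe.mpr (AddSubgroup.mem_map.mpr
        ⟨MilnorK.symbol K q (Function.update f ⟨0, h0⟩ v), ?_, ?_⟩)
      · apply AddSubgroup.subset_closure
        refine ⟨Function.update f ⟨0, h0⟩ v, h0, a, (memdvd s a).mpr has, ?_, rfl⟩
        rw [Function.update_self]
        exact hv
      · show p • MilnorK.symbol K q (Function.update f ⟨0, h0⟩ v) = MilnorK.symbol K q f
        rw [smul_symbol (Function.update f ⟨0, h0⟩ v) ⟨0, h0⟩ p, Function.update_self,
          Function.update_idem, hvp, Function.update_eq_self]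
    intro y hy
    exact AddSubgroup.mem_map.mp (hle hy)
  -- the induced map on quotients
  have hker : pPowSub (MilnorK K q) (p ^ (n - 1)) ≤ ((kmod.mk K q (p ^ n)).comp pHom).ker := by
    refine (AddSubgroup.closure_le _).mpr ?_
    rintro z ⟨y, rfl⟩
    simp only [SetLike.mem_coe, AddMonoidHom.mem_ker, AddMonoidHom.comp_apply]
    show kmod.mk K q (p ^ n) (p • (p ^ (n - 1) • y)) = 0
    rw [smul_smul]
    have hpn : p * p ^ (n - 1) = p ^ n := by
      rw [← pow_succ']
      congr 1
      omega
    rw [hpn]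
    exact (QuotientAddGroup.eq_zero_iff _).mpr (AddSubgroup.subset_closure ⟨y, rfl⟩)
  set ψ : kmod K q (p ^ (n - 1)) →+ kmod K q (p ^ n) :=
    QuotientAddGroup.lift (pPowSub (MilnorK K q) (p ^ (n - 1)))
      ((kmod.mk K q (p ^ n)).comp pHom) hker with hψdef
  have hψ : ∀ x : MilnorK K q,
      ψ (kmod.mk K q (p ^ (n - 1)) x) = kmod.mk K q (p ^ n) (p • x) := fun x => rfl
  have hland : ∀ x : Umk O K s q (p ^ (n - 1)),
      (ψ.comp (Umk O K s q (p ^ (n - 1))).subtype) x ∈ Umk O K m q (p ^ n) := by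
    rintro ⟨z, hz⟩
    obtain ⟨y, hy, rfl⟩ := AddSubgroup.mem_map.mp hz
    show ψ (kmod.mk K q (p ^ (n - 1)) y) ∈ Umk O K m q (p ^ n)
    rw [hψ]
    exact AddSubgroup.mem_map_of_mem _ (hUK y hy)
  refine ⟨AddMonoidHom.codRestrict (ψ.comp (Umk O K s q (p ^ (n - 1))).subtype)
    (Umk O K m q (p ^ n)) hland, ?_, ?_⟩
  · rintro ⟨z, hz⟩
    obtain ⟨y, hy, rfl⟩ := AddSubgroup.mem_map.mp hz
    obtain ⟨x, hx, hxy⟩ := hOnto y hy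
    refine ⟨⟨kmod.mk K q (p ^ (n - 1)) x, AddSubgroup.mem_map_of_mem _ hx⟩, ?_⟩
    apply Subtype.ext
    show ψ (kmod.mk K q (p ^ (n - 1)) x) = kmod.mk K q (p ^ n) y
    rw [hψ, hxy]
  · intro x hx
    refine ⟨AddSubgroup.mem_map_of_mem _ (hUK x hx), ?_⟩
    apply Subtype.ext
    show ψ (kmod.mk K q (p ^ (n - 1)) x) = kmod.mk K q (p ^ n) (p • x)
    exact hψ x
end

section
/- Let K be a complete discrete valuation field of characteristic 0 whose residue field k has characteristic p > 0, let e = v_K(p) and e_0 = e/(p-1). Assume K contains a primitive p^n-th root of unity. If m > ne + e_0, then U^m k_{q,n} = 0, i.e., the image of U^m K_q^M(K) in K_q^M(K)/p^n vanishes. -/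
set_option autoImplicit false

section NewtonStep

variable {O : Type*} [CommRing O]

private lemma dvd_mul_helper (x : O) {α β M : ℕ} (h : M ≤ α + β) {X Y : O}
    (hX : x ^ α ∣ X) (hY : x ^ β ∣ Y) : x ^ M ∣ X * Y :=
  (pow_dvd_pow x h).trans (by rw [pow_add]; exact mul_dvd_mul hX hY)

private lemma newton_step_s3 (ϖ : O) (w : Oˣ) (p e t : ℕ) (hp : p.Prime)
    (hpe : (p : O) = (w : O) * ϖ ^ e)
    (ht1 : 1 ≤ t) (ht : e + 1 ≤ (p - 1) * t)
    (a : O) (j : ℕ) (b : O) (hb : ϖ ^ t ∣ b)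
    (herr : ϖ ^ (e + t + j) ∣ ((1 + b) ^ p - (1 + a))) :
    ∃ d : O, ϖ ^ (t + j) ∣ d ∧
      ϖ ^ (e + t + (j + 1)) ∣ ((1 + (b - d)) ^ p - (1 + a)) := by
  have hp2 := hp.two_le
  obtain ⟨c, hc⟩ := herr
  refine ⟨(w⁻¹ : Oˣ) * ϖ ^ (t + j) * c, ⟨(w⁻¹ : Oˣ) * c, by ring⟩, ?_⟩
  set d : O := (w⁻¹ : Oˣ) * ϖ ^ (t + j) * c with hd
  have hdvd_d : ϖ ^ (t + j) ∣ d := ⟨(w⁻¹ : Oˣ) * c, by rw [hd]; ring⟩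
  have hwinv : (w : O) * (w⁻¹ : Oˣ) = 1 := w.mul_inv
  have hpdvd : ϖ ^ e ∣ (p : O) := ⟨(w : O), by rw [hpe]; ring⟩
  have hpd : (p : O) * d = (1 + b) ^ p - (1 + a) := by
    rw [hc, hpe, hd]
    linear_combination (ϖ ^ e * ϖ ^ (t + j) * c) * hwinv
  set F : ℕ → O := fun k => (-d) ^ k * (1 + b) ^ (p - k) * (p.choose k) with hF
  have hexp : (1 + (b - d)) ^ p = ∑ k ∈ Finset.range (p + 1), F k := by
    rw [show (1 + (b - d)) = -d + (1 + b) by ring, add_pow]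
  have h1 : ∑ k ∈ Finset.range (p + 1), F k
      = (∑ k ∈ Finset.range p, F (k + 1)) + F 0 := Finset.sum_range_succ' F p
  have hrange : p - 1 + 1 = p := by omega
  have h2 : ∑ k ∈ Finset.range p, F (k + 1)
      = (∑ k ∈ Finset.range (p - 1), F (k + 2)) + F 1 := by
    rw [← hrange, Finset.sum_range_succ' (fun k => F (k + 1)) (p - 1)]
    simp
  have hF0 : F 0 = (1 + b) ^ p := by simp [hF]
  have hF1 : F 1 = -d * (1 + b) ^ (p - 1) * (p : O) := by
    simp [hF, Nat.choose_one_right]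
  set T : O := ∑ k ∈ Finset.range (p - 1), F (k + 2) with hT
  have goal_eq : (1 + (b - d)) ^ p - (1 + a)
      = T + (p : O) * d * (1 - (1 + b) ^ (p - 1)) := by
    rw [hexp, h1, h2, hF0, hF1]
    linear_combination -hpd
  rw [goal_eq]
  apply dvd_add
  · -- the sum T
    apply Finset.dvd_sum
    intro k hk
    have hk' : k < p - 1 := Finset.mem_range.1 hk
    have hdk : ϖ ^ (2 * (t + j)) ∣ (-d) ^ (k + 2) := by
      have h1 : (ϖ ^ (t + j)) ^ 2 ∣ (-d) ^ 2 :=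
        pow_dvd_pow_of_dvd ((dvd_neg).2 hdvd_d) 2
      calc ϖ ^ (2 * (t + j)) = (ϖ ^ (t + j)) ^ 2 := by rw [← pow_mul, Nat.mul_comm]
        _ ∣ (-d) ^ 2 := h1
        _ ∣ (-d) ^ (k + 2) := pow_dvd_pow (-d) (by omega)
    rcases eq_or_lt_of_le (show k + 2 ≤ p by omega) with hkp | hkp
    · -- k + 2 = p : use d^p
      have hdp : ϖ ^ (p * (t + j)) ∣ (-d) ^ (k + 2) := by
        calc ϖ ^ (p * (t + j)) = (ϖ ^ (t + j)) ^ p := by rw [← pow_mul, Nat.mul_comm]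
          _ ∣ (-d) ^ p := pow_dvd_pow_of_dvd ((dvd_neg).2 hdvd_d) p
          _ = (-d) ^ (k + 2) := by rw [hkp]
      have hM : e + t + (j + 1) ≤ p * (t + j) := by
        have h3 : (p - 1) * t ≤ (p - 1) * (t + j) := Nat.mul_le_mul_left _ (by omega)
        have h4 : p * (t + j) = (p - 1) * (t + j) + 1 * (t + j) := by
          rw [← Nat.add_mul]; congr 1; omega
        omega
      rw [hF]
      exact dvd_mul_of_dvd_left (dvd_mul_of_dvd_left ((pow_dvd_pow ϖ hM).trans hdp) _) _
    · -- k + 2 < p : use p ∣ choose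
      have hch : (p : O) ∣ (p.choose (k + 2) : O) :=
        Nat.cast_dvd_cast (hp.dvd_choose_self (by omega) hkp)
      have hch' : ϖ ^ e ∣ (p.choose (k + 2) : O) := hpdvd.trans hch
      simp only [hF]
      rw [mul_assoc]
      exact dvd_mul_helper ϖ (by omega) hdk (hch'.mul_left _)
  · -- p * d * (1 - (1+b)^(p-1))
    have hb1 : ϖ ^ t ∣ (1 - (1 + b) ^ (p - 1)) := by
      have h5 : b ∣ ((1 + b) ^ (p - 1) - 1) := by
        have := sub_dvd_pow_sub_pow (1 + b) 1 (p - 1)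
        simpa using this
      have h6 : ϖ ^ t ∣ ((1 + b) ^ (p - 1) - 1) := hb.trans h5
      have h7 : (1 : O) - (1 + b) ^ (p - 1) = -((1 + b) ^ (p - 1) - 1) := by ring
      rw [h7]
      exact (dvd_neg).2 h6
    have h8 : ϖ ^ (e + (t + j)) ∣ (p : O) * d := dvd_mul_helper ϖ le_rfl hpdvd hdvd_d
    exact dvd_mul_helper ϖ (by omega) h8 hb1

end NewtonStep

section Roots

variable {O : Type*} [CommRing O] [IsLocalRing O]
  [IsAdicComplete (IsLocalRing.maximalIdeal O) O]

private lemma exists_pth_root (ϖ : O)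
    (hI : IsLocalRing.maximalIdeal O = Ideal.span {ϖ})
    (w : Oˣ) (p e : ℕ) (hp : p.Prime) (hpe : (p : O) = (w : O) * ϖ ^ e)
    (t m : ℕ) (htm : e + t = m) (ht1 : 1 ≤ t) (ht : e + 1 ≤ (p - 1) * t)
    (a : O) (ha : ϖ ^ m ∣ a) :
    ∃ L : O, ϖ ^ t ∣ L ∧ (1 + L) ^ p = 1 + a := by
  classical
  have hmem : ∀ (k : ℕ) (x : O),
      x ∈ ((IsLocalRing.maximalIdeal O) ^ k • ⊤ : Submodule O O) ↔ ϖ ^ k ∣ x := by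
    intro k x
    rw [← Ideal.one_eq_top, Ideal.smul_eq_mul, mul_one, hI, Ideal.span_singleton_pow,
      Ideal.mem_span_singleton]
  set Φ : ℕ → O → Prop :=
    fun j b => ϖ ^ t ∣ b ∧ ϖ ^ (e + t + j) ∣ ((1 + b) ^ p - (1 + a)) with hΦdef
  have hstep : ∀ j b, Φ j b → ∃ b', Φ (j + 1) b' ∧ ϖ ^ (t + j) ∣ (b - b') := by
    intro j b hb
    obtain ⟨d, hd1, hd2⟩ := newton_step_s3 ϖ w p e t hp hpe ht1 ht a j b hb.1 hb.2
    refine ⟨b - d, ⟨?_, hd2⟩, by simpa using hd1⟩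
    exact dvd_sub hb.1 ((pow_dvd_pow ϖ (Nat.le_add_right t j)).trans hd1)
  choose nxt hnxt1 hnxt2 using hstep
  have hΦ0 : Φ 0 0 := by
    constructor
    · exact dvd_zero _
    · have h9 : (1 + (0 : O)) ^ p - (1 + a) = -a := by ring
      rw [h9, show e + t + 0 = m from by omega]
      exact (dvd_neg).2 ha
  let g : ∀ j : ℕ, {b : O // Φ j b} := fun j =>
    Nat.rec ⟨0, hΦ0⟩ (fun j b => ⟨nxt j b.1 b.2, hnxt1 j b.1 b.2⟩) j
  set f : ℕ → O := fun j => (g j).1 with hfdef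
  have hΦf : ∀ j, Φ j (f j) := fun j => (g j).2
  have hdiff : ∀ j, ϖ ^ (t + j) ∣ (f j - f (j + 1)) := fun j => hnxt2 j (f j) (g j).2
  have hcauchy : ∀ i j, i ≤ j → ϖ ^ (t + i) ∣ (f i - f j) := by
    intro i j hij
    induction j, hij using Nat.le_induction with
    | base => simp
    | succ j hij IH =>
      have h10 : f i - f (j + 1) = (f i - f j) + (f j - f (j + 1)) := by ring
      rw [h10]
      exact dvd_add IH ((pow_dvd_pow ϖ (by omega)).trans (hdiff j))
  have hprec : ∀ {i j : ℕ}, i ≤ j →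
      f i ≡ f j [SMOD ((IsLocalRing.maximalIdeal O) ^ i • ⊤ : Submodule O O)] := by
    intro i j hij
    rw [SModEq.sub_mem, hmem]
    exact (pow_dvd_pow ϖ (by omega : i ≤ t + i)).trans (hcauchy i j hij)
  obtain ⟨L, hL⟩ := IsPrecomplete.prec (IsAdicComplete.toIsPrecomplete) @hprec
  have hLdvd : ∀ j, ϖ ^ j ∣ (f j - L) := fun j => (hmem j _).1 ((SModEq.sub_mem).1 (hL j))
  have hLt : ϖ ^ t ∣ L := by
    have h11 : L = f t - (f t - L) := by ring
    rw [h11]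
    exact dvd_sub (hΦf t).1 (hLdvd t)
  refine ⟨L, hLt, ?_⟩
  have hzero : ∀ j : ℕ,
      ((1 + L) ^ p - (1 + a)) ≡ 0
        [SMOD ((IsLocalRing.maximalIdeal O) ^ j • ⊤ : Submodule O O)] := by
    intro j
    rw [SModEq.zero, hmem]
    have e1 : ϖ ^ j ∣ ((1 + L) ^ p - (1 + f j) ^ p) := by
      have hd1 : (1 + L) - (1 + f j) ∣ ((1 + L) ^ p - (1 + f j) ^ p) :=
        sub_dvd_pow_sub_pow _ _ _
      have hd2 : ϖ ^ j ∣ ((1 + L) - (1 + f j)) := by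
        have h12 : (1 + L) - (1 + f j) = -(f j - L) := by ring
        rw [h12]
        exact (dvd_neg).2 (hLdvd j)
      exact hd2.trans hd1
    have e2 : ϖ ^ j ∣ ((1 + f j) ^ p - (1 + a)) :=
      (pow_dvd_pow ϖ (by omega : j ≤ e + t + j)).trans (hΦf j).2
    have h13 : (1 + L) ^ p - (1 + a)
        = ((1 + L) ^ p - (1 + f j) ^ p) + ((1 + f j) ^ p - (1 + a)) := by ring
    rw [h13]
    exact dvd_add e1 e2
  have := IsHausdorff.haus (IsAdicComplete.toIsHausdorff)
    ((1 + L) ^ p - (1 + a)) hzero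
  exact sub_eq_zero.1 this

private lemma exists_pow_root (ϖ : O)
    (hI : IsLocalRing.maximalIdeal O = Ideal.span {ϖ})
    (w : Oˣ) (p e : ℕ) (hp : p.Prime) (hpe : (p : O) = (w : O) * ϖ ^ e) :
    ∀ (n m : ℕ) (a : O), n * (e * (p - 1)) + e < m * (p - 1) → ϖ ^ m ∣ a →
      ∃ u : O, u ^ p ^ n = 1 + a := by
  intro n
  induction n with
  | zero => intro m a _ _; exact ⟨1 + a, by simp⟩
  | succ n ih =>
    intro m a hcond ha
    have hp2 := hp.two_le
    have hA : (n + 1) * (e * (p - 1)) = n * (e * (p - 1)) + e * (p - 1) := by ring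
    have hem : e < m := by
      by_contra h
      push_neg at h
      have h1 : m * (p - 1) ≤ e * (p - 1) := Nat.mul_le_mul_right _ h
      have h2 : 0 ≤ n * (e * (p - 1)) := Nat.zero_le _
      omega
    set t := m - e with htdef
    have htm : e + t = m := by omega
    have hC : t * (p - 1) + e * (p - 1) = m * (p - 1) := by
      rw [← Nat.add_mul, show t + e = m from by omega]
    have ht : e + 1 ≤ (p - 1) * t := by
      rw [Nat.mul_comm]
      have h2 : 0 ≤ n * (e * (p - 1)) := Nat.zero_le _
      omega
    have ht1 : 1 ≤ t := by
      rcases Nat.eq_zero_or_pos t with h | h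
      · rw [h, Nat.mul_zero] at ht; omega
      · exact h
    have hcond' : n * (e * (p - 1)) + e < t * (p - 1) := by omega
    obtain ⟨L, hLt, hLp⟩ := exists_pth_root ϖ hI w p e hp hpe t m htm ht1 ht a ha
    obtain ⟨u, hu⟩ := ih t L hcond' hLt
    exact ⟨u, by rw [pow_succ, pow_mul, hu, hLp]⟩

end Roots

section MilnorLemmas

variable {K : Type*} [Field K]

private lemma symbol_update_mul (q : ℕ) (f : Fin q → Kˣ) (i : Fin q) (a b : Kˣ) :
    MilnorK.symbol K q (Function.update f i (a * b)) =
      MilnorK.symbol K q (Function.update f i a)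
        + MilnorK.symbol K q (Function.update f i b) := by
  have hmem : FreeAbelianGroup.of (Function.update f i (a * b))
      - FreeAbelianGroup.of (Function.update f i a)
      - FreeAbelianGroup.of (Function.update f i b) ∈ MilnorKRel K q :=
    AddSubgroup.subset_closure (Or.inl ⟨f, i, a, b, rfl⟩)
  have h0 : (QuotientAddGroup.mk' (MilnorKRel K q))
      (FreeAbelianGroup.of (Function.update f i (a * b))
        - FreeAbelianGroup.of (Function.update f i a)
        - FreeAbelianGroup.of (Function.update f i b)) = 0 := by
    rw [QuotientAddGroup.mk'_apply]
    exact (QuotientAddGroup.eq_zero_iff _).2 hmem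
  rw [map_sub, map_sub] at h0
  have h1 : MilnorK.symbol K q (Function.update f i (a * b))
      - MilnorK.symbol K q (Function.update f i a)
      - MilnorK.symbol K q (Function.update f i b) = 0 := h0
  rw [sub_sub, sub_eq_zero] at h1
  exact h1

private lemma symbol_update_one (q : ℕ) (f : Fin q → Kˣ) (i : Fin q) :
    MilnorK.symbol K q (Function.update f i 1) = 0 := by
  have h := symbol_update_mul q f i 1 1
  rw [one_mul] at h
  exact (left_eq_add.1 h)

private lemma symbol_update_pow (q : ℕ) (f : Fin q → Kˣ) (i : Fin q) (g : Kˣ) (k : ℕ) :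
    MilnorK.symbol K q (Function.update f i (g ^ k))
      = k • MilnorK.symbol K q (Function.update f i g) := by
  induction k with
  | zero => rw [pow_zero, zero_smul]; exact symbol_update_one q f i
  | succ k ih => rw [pow_succ, symbol_update_mul q f i (g ^ k) g, ih, succ_nsmul]

end MilnorLemmas

/-- **Theorem (iii).** Let `K` be a complete discrete valuation field of characteristic
`0` whose residue field has characteristic `p > 0`, `e = v_K(p)`, `e₀ = e/(p-1)`.
Assume `K` contains a primitive `p^n`-th root of unity.  If `m > n·e + e₀`, then
`U^m k_{q,n} = 0`. -/
theorem milnor_U_vanishes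
    (O : Type*) [CommRing O] [IsDomain O] [IsDiscreteValuationRing O]
    [IsAdicComplete (IsLocalRing.maximalIdeal O) O]
    (K : Type*) [Field K] [Algebra O K] [IsFractionRing O K] [CharZero K]
    (p : ℕ) [Fact p.Prime] [CharP (IsLocalRing.ResidueField O) p]
    (e : ℕ)
    (he : (p : O) ∈ (IsLocalRing.maximalIdeal O) ^ e ∧
          (p : O) ∉ (IsLocalRing.maximalIdeal O) ^ (e + 1))
    (q n m : ℕ)
    (ζ : K) (hζ : IsPrimitiveRoot ζ (p ^ n))
    (hm : (n : ℚ) * (e : ℚ) + (e : ℚ) / ((p : ℚ) - 1) < (m : ℚ)) :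
    Umk O K m q (p ^ n) = ⊥ := by
  classical
  obtain ⟨ϖ, hϖ⟩ := IsDiscreteValuationRing.exists_irreducible O
  have hI : IsLocalRing.maximalIdeal O = Ideal.span {ϖ} :=
    (IsDiscreteValuationRing.irreducible_iff_uniformizer ϖ).1 hϖ
  have hmem : ∀ (k : ℕ) (x : O), x ∈ (IsLocalRing.maximalIdeal O) ^ k ↔ ϖ ^ k ∣ x := by
    intro k x; rw [hI, Ideal.span_singleton_pow, Ideal.mem_span_singleton]
  have hp : p.Prime := Fact.out
  have hp2 := hp.two_le
  obtain ⟨c, hc⟩ := (hmem e _).1 he.1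
  have hcu : IsUnit c := by
    by_contra hnc
    apply he.2
    rw [hmem]
    have hcm : c ∈ IsLocalRing.maximalIdeal O :=
      (IsLocalRing.mem_maximalIdeal c).mpr (mem_nonunits_iff.mpr hnc)
    rw [hI, Ideal.mem_span_singleton] at hcm
    obtain ⟨c', hc'⟩ := hcm
    exact ⟨c', by rw [hc, hc', pow_succ]; ring⟩
  have hpe : (p : O) = (hcu.unit : O) * ϖ ^ e := by
    rw [hcu.unit_spec, hc]; ring
  have hq0 : (0 : ℚ) < (p : ℚ) - 1 := by
    have h2 : (2 : ℚ) ≤ (p : ℚ) := by exact_mod_cast hp2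
    linarith
  have hcond : n * (e * (p - 1)) + e < m * (p - 1) := by
    have key : ((n * (e * (p - 1)) + e : ℕ) : ℚ) < ((m * (p - 1) : ℕ) : ℚ) := by
      push_cast [Nat.cast_sub (show 1 ≤ p from by omega)]
      have h2 := mul_lt_mul_of_pos_right hm hq0
      have h3 : (e : ℚ) / ((p : ℚ) - 1) * ((p : ℚ) - 1) = e :=
        div_mul_cancel₀ _ (ne_of_gt hq0)
      nlinarith [h2, h3]
    exact_mod_cast key
  have hroot := exists_pow_root ϖ hI hcu.unit p e hp hpe n
  rw [eq_bot_iff, Umk, AddSubgroup.map_le_iff_le_comap, UK]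
  refine (AddSubgroup.closure_le _).2 ?_
  rintro z ⟨f, h0, a, haI, hf0, rfl⟩
  simp only [SetLike.mem_coe, AddSubgroup.mem_comap, AddSubgroup.mem_bot]
  obtain ⟨u, hu⟩ := hroot m a hcond ((hmem m a).1 haI)
  set i0 : Fin q := ⟨0, h0⟩ with hi0
  have hK : (algebraMap O K u) ^ (p ^ n) = (f i0 : K) := by
    rw [← map_pow, hu, map_add, map_one, hf0]
  have hne : algebraMap O K u ≠ 0 := by
    intro h
    rw [h, zero_pow (by positivity)] at hK
    exact (f i0).ne_zero hK.symm
  set u' : Kˣ := Units.mk0 _ hne with hu'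
  have hfu : f i0 = u' ^ (p ^ n) := by
    apply Units.ext
    rw [Units.val_pow_eq_pow_val]
    simp only [hu', Units.val_mk0]
    exact hK.symm
  have hsymb : MilnorK.symbol K q f
      = (p ^ n) • MilnorK.symbol K q (Function.update f i0 u') := by
    conv_lhs => rw [show f = Function.update f i0 (u' ^ (p ^ n)) from by
      rw [← hfu, Function.update_eq_self]]
    exact symbol_update_pow q f i0 u' (p ^ n)
  have hmemp : MilnorK.symbol K q f ∈ pPowSub (MilnorK K q) (p ^ n) :=
    AddSubgroup.subset_closure ⟨_, hsymb⟩
  have hfin : ((MilnorK.symbol K q f : MilnorK K q) :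
      MilnorK K q ⧸ pPowSub (MilnorK K q) (p ^ n)) = 0 :=
    (QuotientAddGroup.eq_zero_iff _).2 hmemp
  exact hfin
end
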